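/- Let g : (0,∞) → (0,∞) be measurable, bounded on compact subsets of (0,∞), slowly varying at infinity (i.e. for every c>0, g(cx)/g(x) → 1 as x → ∞), and satisfy ∫_0^1 g(v) dv < ∞. Then lim_{λ→∞} ( ∫_0^∞ (1 − cos(λx))·g(1/x)·x^{−2} dx ) / ( λ·g(λ) ) = π/2. -/

import Mathlib

open MeasureTheory Real Filter Set
open scoped Pointwise

lemma texp_le {u t : ℝ} (hu : 0 < u) (ht : 0 ≤ t) :
    t * rexp (-(u * t)) ≤ (2 / u) * rexp (-(u / 2 * t)) := by
  have h1 : rexp (-(u * t)) = rexp (-(u/2*t)) * rexp (-(u/2*t)) := by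
    rw [← Real.exp_add]; ring_nf
  rw [h1, ← mul_assoc]
  have h2 : t * rexp (-(u/2*t)) ≤ 2 / u := by
    have := Real.add_one_le_exp (u/2*t)
    have hinv : rexp (-(u/2*t)) = (rexp (u/2*t))⁻¹ := by rw [Real.exp_neg]
    rw [hinv]
    rw [mul_inv_le_iff₀ (Real.exp_pos _)]
    calc t ≤ (2/u) * (u/2*t) := by rw [mul_comm]; field_simp; exact le_rfl
      _ ≤ (2/u) * rexp (u/2*t) := by
          apply mul_le_mul_of_nonneg_left _ (by positivity)
          nlinarith [Real.add_one_le_exp (u/2*t), Real.exp_pos (u/2*t)]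
  exact mul_le_mul_of_nonneg_right h2 (Real.exp_pos _).le

lemma integrable_texp {u : ℝ} (hu : 0 < u) :
    IntegrableOn (fun t => t * rexp (-(u * t))) (Ioi (0:ℝ)) := by
  apply Integrable.mono' (((exp_neg_integrableOn_Ioi 0 (by positivity : (0:ℝ) < u/2))).const_mul (2/u))
  · exact (continuous_id.mul (Real.continuous_exp.comp (continuous_const.mul continuous_id).neg)).aestronglyMeasurable
  · filter_upwards [ae_restrict_mem measurableSet_Ioi] with t ht
    have ht' : (0:ℝ) < t := ht
    rw [Real.norm_eq_abs, abs_of_nonneg (mul_nonneg ht'.le (Real.exp_pos _).le)]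
    simpa [neg_mul, mul_comm] using texp_le hu (le_of_lt ht)

lemma integral_texp {u : ℝ} (hu : 0 < u) :
    ∫ t in Ioi (0:ℝ), t * rexp (-(u * t)) = 1 / u ^ 2 := by
  have hderiv : ∀ t ∈ Ici (0:ℝ),
      HasDerivAt (fun t => -((t / u + 1 / u ^ 2) * rexp (-(u * t)))) (t * rexp (-(u * t))) t := by
    intro t _
    have h1 : HasDerivAt (fun t : ℝ => t / u + 1 / u ^ 2) (1/u) t := by
      exact ((hasDerivAt_id t).div_const u).add_const (1/u^2)
    have h2 : HasDerivAt (fun t : ℝ => rexp (-(u * t))) (rexp (-(u * t)) * (-u)) t := by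
      have : HasDerivAt (fun t : ℝ => -(u * t)) (-u) t := by
        simpa using ((hasDerivAt_id t).const_mul u).fun_neg
      exact (Real.hasDerivAt_exp _).comp t this
    convert (h1.fun_mul h2).fun_neg using 1
    · rfl
    · rfl
    have hu' : u ≠ 0 := ne_of_gt hu
    field_simp
    ring
  have htop : Tendsto (fun t => -((t / u + 1 / u ^ 2) * rexp (-(u * t)))) atTop (nhds 0) := by
    have : Tendsto (fun t : ℝ => (t / u + 1 / u ^ 2) * rexp (-(u * t))) atTop (nhds 0) := by
      have hs : Tendsto (fun t : ℝ => u * t) atTop atTop :=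
        Tendsto.const_mul_atTop hu tendsto_id
      have h1 : Tendsto (fun s : ℝ => (s ^ 1 * rexp (-s) + rexp (-s)) / u ^ 2) atTop (nhds 0) := by
        simpa using ((Real.tendsto_pow_mul_exp_neg_atTop_nhds_zero 1).add
          Real.tendsto_exp_neg_atTop_nhds_zero).div_const (u^2)
      apply (h1.comp hs).congr
      intro t
      have hu' : u ≠ 0 := ne_of_gt hu
      simp only [Function.comp_apply, pow_one]
      field_simp
    simpa using this.neg
  have := integral_Ioi_of_hasDerivAt_of_tendsto' hderiv (integrable_texp hu) htop
  rw [this]; simp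

lemma integrable_onecos_exp {t : ℝ} (ht : 0 < t) :
    IntegrableOn (fun u => (1 - Real.cos u) * rexp (-(u * t))) (Ioi (0:ℝ)) := by
  apply Integrable.mono' ((exp_neg_integrableOn_Ioi 0 ht).const_mul 2)
  · exact ((continuous_const.sub Real.continuous_cos).mul
      (Real.continuous_exp.comp (continuous_id.mul continuous_const).neg)).aestronglyMeasurable
  · filter_upwards with u
    rw [Real.norm_eq_abs, abs_mul, abs_of_nonneg (Real.exp_pos _).le, neg_mul, mul_comm t u]
    have h1 : |1 - Real.cos u| ≤ 2 := by
      have := Real.neg_one_le_cos u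
      have := Real.cos_le_one u
      rw [abs_le]; constructor <;> linarith
    exact mul_le_mul_of_nonneg_right h1 (Real.exp_pos _).le

lemma integral_onecos_exp {t : ℝ} (ht : 0 < t) :
    ∫ u in Ioi (0:ℝ), (1 - Real.cos u) * rexp (-(u * t)) = 1 / t - t / (t ^ 2 + 1) := by
  have ht' : t ≠ 0 := ne_of_gt ht
  set F : ℝ → ℝ := fun u => -((1/t) * rexp (-(u*t))) + rexp (-(u*t)) * ((t * Real.cos u - Real.sin u) / (t^2+1)) with hF
  have hE : ∀ u : ℝ, HasDerivAt (fun u : ℝ => rexp (-(u*t))) (rexp (-(u*t)) * (-t)) u := by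
    intro u
    have h : HasDerivAt (fun u : ℝ => -(u*t)) (-t) u := by
      simpa using ((hasDerivAt_id u).mul_const t).fun_neg
    exact (Real.hasDerivAt_exp _).comp u h
  have hderiv : ∀ u ∈ Ici (0:ℝ), HasDerivAt F ((1 - Real.cos u) * rexp (-(u * t))) u := by
    intro u _
    have h2 : HasDerivAt (fun u : ℝ => t * Real.cos u - Real.sin u)
        (t * (-Real.sin u) - Real.cos u) u :=
      ((Real.hasDerivAt_cos u).const_mul t).sub (Real.hasDerivAt_sin u)
    have := (((hE u).const_mul (1/t)).fun_neg).fun_add ((hE u).fun_mul (h2.div_const (t^2+1)))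
    convert this using 1
    · rfl
    · rfl
    have h3 : t^2 + 1 ≠ 0 := by positivity
    field_simp
    ring
  have htop : Tendsto F atTop (nhds 0) := by
    have hE0 : Tendsto (fun u : ℝ => rexp (-(u*t))) atTop (nhds 0) := by
      have hs : Tendsto (fun u : ℝ => u * t) atTop atTop :=
        Tendsto.atTop_mul_const ht tendsto_id
      exact tendsto_exp_neg_atTop_nhds_zero.comp hs
    have : Tendsto (fun u : ℝ => rexp (-(u*t)) * (-(1/t) + (t * Real.cos u - Real.sin u) / (t^2+1)))
        atTop (nhds 0) := by
      apply Tendsto.zero_mul_isBoundedUnder_le hE0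
      apply isBoundedUnder_of
      refine ⟨1/t + (|t| + 1) / (t^2+1), fun u => ?_⟩
      have h3 : (0:ℝ) < t^2 + 1 := by positivity
      have h4 : |t * Real.cos u - Real.sin u| ≤ |t| + 1 := by
        calc |t * Real.cos u - Real.sin u| ≤ |t * Real.cos u| + |Real.sin u| := abs_sub _ _
          _ ≤ |t| * 1 + 1 := by
              rw [abs_mul]
              gcongr
              exacts [Real.abs_cos_le_one u, Real.abs_sin_le_one u]
          _ = |t| + 1 := by ring
      calc ‖-(1/t) + (t * Real.cos u - Real.sin u) / (t^2+1)‖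
          ≤ ‖-(1/t)‖ + ‖(t * Real.cos u - Real.sin u) / (t^2+1)‖ := norm_add_le _ _
        _ ≤ 1/t + (|t| + 1) / (t^2+1) := by
            rw [Real.norm_eq_abs, Real.norm_eq_abs, abs_neg,
              abs_of_pos (by positivity : (0:ℝ) < 1/t), abs_div, abs_of_pos h3]
            gcongr
    apply this.congr
    intro u
    rw [hF]
    ring
  have := integral_Ioi_of_hasDerivAt_of_tendsto' hderiv (integrable_onecos_exp ht) htop
  rw [this, hF]
  simp [Real.cos_zero, Real.sin_zero]
  field_simp
  ring

noncomputable def Phi : ℝ → ℝ → ℝ := fun t u => (1 - Real.cos u) * (t * rexp (-(u * t)))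

lemma Phi_cont : Continuous (Function.uncurry Phi) := by
  unfold Phi Function.uncurry
  fun_prop

lemma Phi_nonneg {t u : ℝ} (ht : 0 ≤ t) : 0 ≤ Phi t u := by
  unfold Phi
  have h1 : 0 ≤ 1 - Real.cos u := by nlinarith [Real.cos_le_one u]
  exact mul_nonneg h1 (mul_nonneg ht (Real.exp_pos _).le)

lemma Phi_integral_u {t : ℝ} (ht : 0 < t) :
    ∫ u in Ioi (0:ℝ), Phi t u = (1 + t ^ 2)⁻¹ := by
  unfold Phi
  have : ∀ u : ℝ, (1 - Real.cos u) * (t * rexp (-(u * t))) = t * ((1 - Real.cos u) * rexp (-(u * t))) := by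
    intro u; ring
  simp_rw [this]
  rw [integral_const_mul, integral_onecos_exp ht]
  have h1 : t ≠ 0 := ne_of_gt ht
  have h2 : t ^ 2 + 1 ≠ 0 := by positivity
  have h3 : 1 + t ^ 2 ≠ 0 := by positivity
  field_simp
  ring

lemma Phi_integrable_u {t : ℝ} (ht : 0 < t) :
    IntegrableOn (fun u => Phi t u) (Ioi (0:ℝ)) := by
  unfold Phi
  apply ((integrable_onecos_exp ht).const_mul t).congr
  filter_upwards with u
  ring

lemma Phi_prod_integrable :
    Integrable (Function.uncurry Phi)
      ((volume.restrict (Ioi (0:ℝ))).prod (volume.restrict (Ioi (0:ℝ)))) := by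
  rw [MeasureTheory.integrable_prod_iff (Phi_cont.aestronglyMeasurable)]
  constructor
  · filter_upwards [ae_restrict_mem measurableSet_Ioi] with t ht
    exact Phi_integrable_u ht
  · apply MeasureTheory.Integrable.congr (integrable_inv_one_add_sq.integrableOn (s := Ioi (0:ℝ)))
    filter_upwards [ae_restrict_mem measurableSet_Ioi] with t ht
    have h1 : ∀ u : ℝ, ‖Phi t u‖ = Phi t u := fun u =>
      Real.norm_of_nonneg (Phi_nonneg (le_of_lt ht))
    simp only [Function.uncurry_apply_pair]
    calc (1 + t^2)⁻¹ = ∫ u in Ioi (0:ℝ), Phi t u := (Phi_integral_u ht).symm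
      _ = ∫ u in Ioi (0:ℝ), ‖Phi t u‖ := by
          apply integral_congr_ae
          filter_upwards with u
          exact (h1 u).symm

lemma integral_K : ∫ u in Ioi (0:ℝ), (1 - Real.cos u) / u ^ 2 = π / 2 := by
  have hswap := MeasureTheory.integral_integral_swap Phi_prod_integrable
  have hLHS : ∫ t in Ioi (0:ℝ), ∫ u in Ioi (0:ℝ), Phi t u = π / 2 := by
    rw [show (π/2 : ℝ) = π/2 - Real.arctan 0 by simp]
    rw [← integral_Ioi_inv_one_add_sq (i := 0)]
    apply integral_congr_ae
    filter_upwards [ae_restrict_mem measurableSet_Ioi] with t ht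
    exact Phi_integral_u ht
  have hRHS : ∫ u in Ioi (0:ℝ), ∫ t in Ioi (0:ℝ), Phi t u
      = ∫ u in Ioi (0:ℝ), (1 - Real.cos u) / u ^ 2 := by
    apply integral_congr_ae
    filter_upwards [ae_restrict_mem measurableSet_Ioi] with u hu
    unfold Phi
    rw [integral_const_mul, integral_texp hu]
    rw [mul_one_div]
  rw [← hRHS, ← hswap, hLHS]

lemma integrableOn_K : IntegrableOn (fun u => (1 - Real.cos u) / u ^ 2) (Ioi (0:ℝ)) := by
  have h := Phi_prod_integrable.integral_norm_prod_right
  apply h.congr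
  filter_upwards [ae_restrict_mem measurableSet_Ioi] with u hu
  have h1 : ∀ t : ℝ, t ∈ Ioi (0:ℝ) → ‖Function.uncurry Phi (t, u)‖ = Phi t u := fun t ht =>
    Real.norm_of_nonneg (Phi_nonneg (le_of_lt ht))
  calc (∫ t in Ioi (0:ℝ), ‖Function.uncurry Phi (t, u)‖)
      = ∫ t in Ioi (0:ℝ), Phi t u := by
        apply integral_congr_ae
        filter_upwards [ae_restrict_mem measurableSet_Ioi] with t ht
        exact h1 t ht
    _ = (1 - Real.cos u) / u ^ 2 := by
        unfold Phi
        rw [integral_const_mul, integral_texp hu, mul_one_div]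

lemma uct {h : ℝ → ℝ} (hm : Measurable h)
    (hsl : ∀ s : ℝ, Tendsto (fun x => h (x + s) - h x) atTop (nhds 0)) :
    ∀ ε > (0:ℝ), ∀ᶠ x in atTop, ∀ s ∈ Icc (0:ℝ) 1, |h (x + s) - h x| ≤ ε := by
  intro ε hε
  by_contra hcon
  rw [Filter.not_eventually] at hcon
  have hseq : ∀ n : ℕ, ∃ x : ℝ, (n:ℝ) ≤ x ∧ ∃ s ∈ Icc (0:ℝ) 1, ε < |h (x + s) - h x| := by
    intro n
    rcases Filter.frequently_atTop.mp hcon (n:ℝ) with ⟨x, hx, hP⟩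
    push_neg at hP
    rcases hP with ⟨s, hs, hs2⟩
    exact ⟨x, hx, s, hs, hs2⟩
  choose x hxge s hsmem hsbig using hseq
  have hxt : Tendsto x atTop atTop :=
    tendsto_atTop_mono hxge tendsto_natCast_atTop_atTop
  have hxst : Tendsto (fun n => x n + s n) atTop atTop :=
    tendsto_atTop_mono (fun n => le_add_of_nonneg_right (hsmem n).1) hxt
  set f1 : ℕ → ℝ → ℝ := fun n σ => h (x n + σ) - h (x n) with hf1
  set f2 : ℕ → ℝ → ℝ := fun n σ => h (x n + s n + σ) - h (x n + s n) with hf2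
  have hIcc2 : volume (Icc (0:ℝ) 2) ≠ ⊤ := by
    simp [Real.volume_Icc]
  have hsm1 : ∀ n, StronglyMeasurable (f1 n) := fun n =>
    ((hm.comp (measurable_const.add measurable_id)).sub measurable_const).stronglyMeasurable
  have hsm2 : ∀ n, StronglyMeasurable (f2 n) := fun n =>
    ((hm.comp (measurable_const.add measurable_id)).sub measurable_const).stronglyMeasurable
  have hfg1 : ∀ᵐ σ ∂(volume : Measure ℝ), σ ∈ Icc (0:ℝ) 2 →
      Tendsto (fun n => f1 n σ) atTop (nhds ((fun _ => (0:ℝ)) σ)) := by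
    filter_upwards with σ _
    exact (hsl σ).comp hxt
  have hfg2 : ∀ᵐ σ ∂(volume : Measure ℝ), σ ∈ Icc (0:ℝ) 2 →
      Tendsto (fun n => f2 n σ) atTop (nhds ((fun _ => (0:ℝ)) σ)) := by
    filter_upwards with σ _
    exact (hsl σ).comp hxst
  obtain ⟨t1, ht1sub, ht1m, ht1μ, hu1⟩ :=
    MeasureTheory.tendstoUniformlyOn_of_ae_tendsto hsm1 stronglyMeasurable_const
      measurableSet_Icc hIcc2 hfg1 (by norm_num : (0:ℝ) < 1/4)
  obtain ⟨t2, ht2sub, ht2m, ht2μ, hu2⟩ :=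
    MeasureTheory.tendstoUniformlyOn_of_ae_tendsto hsm2 stronglyMeasurable_const
      measurableSet_Icc hIcc2 hfg2 (by norm_num : (0:ℝ) < 1/4)
  set A := Icc (0:ℝ) 2 \ t1 with hA
  set B := Icc (0:ℝ) 2 \ t2 with hB
  have hεh : (0:ℝ) < ε/2 := by positivity
  obtain ⟨N, hN1, hN2⟩ :=
    ((Metric.tendstoUniformlyOn_iff.mp hu1 (ε/2) hεh).and
      (Metric.tendstoUniformlyOn_iff.mp hu2 (ε/2) hεh)).exists
  -- measure bounds
  have hmeasA : ENNReal.ofReal (7/4) ≤ volume A := by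
    rw [hA]
    have hd : volume (Icc (0:ℝ) 2 \ t1) = volume (Icc (0:ℝ) 2) - volume t1 :=
      measure_diff ht1sub ht1m.nullMeasurableSet (lt_of_le_of_lt ht1μ (by norm_num)).ne
    rw [hd, Real.volume_Icc]
    calc ENNReal.ofReal (7/4) = ENNReal.ofReal (2 - 0) - ENNReal.ofReal (1/4) := by
          rw [← ENNReal.ofReal_sub _ (by norm_num)]; norm_num
      _ ≤ ENNReal.ofReal (2 - 0) - volume t1 := tsub_le_tsub le_rfl ht1μ
  have hmeasB : ENNReal.ofReal (7/4) ≤ volume B := by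
    rw [hB]
    have hd : volume (Icc (0:ℝ) 2 \ t2) = volume (Icc (0:ℝ) 2) - volume t2 :=
      measure_diff ht2sub ht2m.nullMeasurableSet (lt_of_le_of_lt ht2μ (by norm_num)).ne
    rw [hd, Real.volume_Icc]
    calc ENNReal.ofReal (7/4) = ENNReal.ofReal (2 - 0) - ENNReal.ofReal (1/4) := by
          rw [← ENNReal.ofReal_sub _ (by norm_num)]; norm_num
      _ ≤ ENNReal.ofReal (2 - 0) - volume t2 := tsub_le_tsub le_rfl ht2μ
  set C := (s N) +ᵥ B with hC
  have hmeasC : ENNReal.ofReal (7/4) ≤ volume C := by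
    rw [hC, measure_vadd]
    exact hmeasB
  have hsub : A ∪ C ⊆ Icc (0:ℝ) 3 := by
    rintro σ (hσ | hσ)
    · have := ht1sub
      have h2 : σ ∈ Icc (0:ℝ) 2 := hσ.1
      exact ⟨h2.1, le_trans h2.2 (by norm_num)⟩
    · rcases hσ with ⟨τ, hτ, rfl⟩
      have h2 : τ ∈ Icc (0:ℝ) 2 := hτ.1
      have h3 := hsmem N
      constructor
      · simp only [vadd_eq_add]
        have := h3.1; have := h2.1; linarith
      · simp only [vadd_eq_add]
        have := h3.2; have := h2.2; linarith
  have hne : (A ∩ C).Nonempty := by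
    by_contra hemp
    rw [Set.not_nonempty_iff_eq_empty] at hemp
    have hdisj : Disjoint A C := Set.disjoint_iff_inter_eq_empty.mpr hemp
    have hCm : MeasurableSet C := by
      rw [hC]
      exact (measurableSet_Icc.diff ht2m).const_vadd _
    have h1 : volume (A ∪ C) = volume A + volume C := measure_union hdisj hCm
    have h2 : volume (A ∪ C) ≤ ENNReal.ofReal 3 := by
      have := measure_mono (μ := (volume : Measure ℝ)) hsub
      rwa [Real.volume_Icc, show (3:ℝ) - 0 = 3 by norm_num] at this
    have h3 : ENNReal.ofReal (7/2) ≤ volume (A ∪ C) := by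
      rw [h1]
      calc ENNReal.ofReal (7/2) = ENNReal.ofReal (7/4) + ENNReal.ofReal (7/4) := by
            rw [← ENNReal.ofReal_add (by norm_num) (by norm_num)]; norm_num
        _ ≤ volume A + volume C := add_le_add hmeasA hmeasC
    have := le_trans h3 h2
    rw [ENNReal.ofReal_le_ofReal_iff (by norm_num)] at this
    norm_num at this
  obtain ⟨σ, hσA, hσC⟩ := hne
  obtain ⟨τ, hτB, hστ⟩ := hσC
  have e1 : dist ((fun _ => (0:ℝ)) σ) (f1 N σ) < ε/2 := hN1 σ hσA
  have e2 : dist ((fun _ => (0:ℝ)) τ) (f2 N τ) < ε/2 := hN2 τ hτB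
  rw [Real.dist_eq] at e1 e2
  simp only [zero_sub, abs_neg] at e1 e2
  have key : h (x N + s N) - h (x N) = f1 N σ - f2 N τ := by
    rw [hf1, hf2]
    simp only
    have : x N + σ = x N + s N + τ := by
      rw [← hστ]; simp [vadd_eq_add]; ring
    rw [this]
    ring
  have : |h (x N + s N) - h (x N)| ≤ |f1 N σ| + |f2 N τ| := by
    rw [key]; exact abs_sub _ _
  have := hsbig N
  linarith

lemma uct_chain {h : ℝ → ℝ} {ε X : ℝ}
    (hX : ∀ x ≥ X, ∀ s ∈ Icc (0:ℝ) 1, |h (x + s) - h x| ≤ ε) :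
    ∀ n : ℕ, ∀ x ≥ X, ∀ s ∈ Icc (0:ℝ) ((n:ℝ)+1), |h (x + s) - h x| ≤ ε * ((n:ℝ)+1) := by
  intro n
  induction n with
  | zero =>
    intro x hx s hs
    simpa using hX x hx s (by simpa using hs)
  | succ n ih =>
    intro x hx s hs
    have hε : 0 ≤ ε := by
      have := hX x hx 0 ⟨le_refl 0, zero_le_one⟩
      exact le_trans (abs_nonneg _) this
    push_cast at hs ⊢
    rcases le_or_gt s ((n:ℝ)+1) with hle | hgt
    · calc |h (x+s) - h x| ≤ ε * ((n:ℝ)+1) := ih x hx s ⟨hs.1, hle⟩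
        _ ≤ ε * ((n:ℝ)+1+1) := by nlinarith
    · have hs1 : (1:ℝ) ≤ s := by
        have : (0:ℝ) ≤ (n:ℝ) := Nat.cast_nonneg n
        linarith
      have h2 : X ≤ x + (s - 1) := by linarith
      have hmem : s - 1 ∈ Icc (0:ℝ) ((n:ℝ)+1) := ⟨by linarith, by linarith [hs.2]⟩
      have e1 : |h ((x + (s-1)) + 1) - h (x + (s-1))| ≤ ε :=
        hX (x + (s-1)) h2 1 ⟨zero_le_one, le_refl 1⟩
      have e2 : |h (x + (s-1)) - h x| ≤ ε * ((n:ℝ)+1) := ih x hx (s-1) hmem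
      have e3 : (x + (s-1)) + 1 = x + s := by ring
      rw [e3] at e1
      calc |h (x+s) - h x| = |(h (x+s) - h (x + (s-1))) + (h (x + (s-1)) - h x)| := by ring_nf
        _ ≤ |h (x+s) - h (x + (s-1))| + |h (x + (s-1)) - h x| := abs_add_le _ _
        _ ≤ ε + ε * ((n:ℝ)+1) := add_le_add e1 e2
        _ = ε * ((n:ℝ)+1+1) := by ring

lemma uct_real {h : ℝ → ℝ} {ε X : ℝ}
    (hX : ∀ x ≥ X, ∀ s ∈ Icc (0:ℝ) 1, |h (x + s) - h x| ≤ ε) :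
    ∀ a b : ℝ, X ≤ a → X ≤ b → |h b - h a| ≤ ε * (|b - a| + 1) := by
  have key : ∀ a b : ℝ, X ≤ a → a ≤ b → |h b - h a| ≤ ε * (|b - a| + 1) := by
    intro a b ha hab
    set s := b - a with hsdef
    have hs0 : 0 ≤ s := by simp [hsdef]; linarith
    have hfl : s ≤ ((⌊s⌋₊ : ℝ) + 1) := (Nat.lt_floor_add_one s).le
    have hmem : s ∈ Icc (0:ℝ) ((⌊s⌋₊:ℝ)+1) := ⟨hs0, hfl⟩
    have := uct_chain hX ⌊s⌋₊ a ha s hmem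
    have hε : 0 ≤ ε := by
      have := hX a ha 0 ⟨le_refl 0, zero_le_one⟩
      exact le_trans (abs_nonneg _) this
    have hfl2 : ((⌊s⌋₊:ℝ)) ≤ s := Nat.floor_le hs0
    have hb : a + s = b := by rw [hsdef]; ring
    rw [hb] at this
    calc |h b - h a| ≤ ε * ((⌊s⌋₊:ℝ)+1) := this
      _ ≤ ε * (s + 1) := by nlinarith
      _ = ε * (|b - a| + 1) := by rw [abs_of_nonneg hs0]
  intro a b ha hb
  rcases le_total a b with hab | hba
  · exact key a b ha hab
  · have := key b a hb hba
    rw [abs_sub_comm (h a) (h b), abs_sub_comm a b] at this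
    exact this

lemma abs_log_sub_eq {x y : ℝ} (hx : 0 < x) (hy : 0 < y) :
    |Real.log y - Real.log x| = Real.log (max (y/x) (x/y)) := by
  rcases le_total x y with hxy | hyx
  · have h1 : x/y ≤ 1 := by rw [div_le_one hy]; exact hxy
    have h2 : 1 ≤ y/x := by rw [le_div_iff₀ hx]; simpa using hxy
    rw [max_eq_left (le_trans h1 h2), Real.log_div (ne_of_gt hy) (ne_of_gt hx),
      abs_of_nonneg (by rw [sub_nonneg]; exact Real.log_le_log hx hxy)]
  · have h1 : y/x ≤ 1 := by rw [div_le_one hx]; exact hyx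
    have h2 : 1 ≤ x/y := by rw [le_div_iff₀ hy]; simpa using hyx
    rw [max_eq_right (le_trans h1 h2), Real.log_div (ne_of_gt hx) (ne_of_gt hy),
      abs_of_nonpos (by rw [sub_nonpos]; exact Real.log_le_log hy hyx)]
    rw [neg_sub]

lemma potter (g : ℝ → ℝ) (hgm : Measurable g)
    (hgpos : ∀ x ∈ Set.Ioi (0:ℝ), 0 < g x)
    (hslow : ∀ c : ℝ, 0 < c → Tendsto (fun x => g (c * x) / g x) atTop (nhds 1)) :
    ∃ X : ℝ, 1 ≤ X ∧ ∀ x y : ℝ, X ≤ x → X ≤ y →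
      g y ≤ Real.exp (1/2) * g x * (max (y/x) (x/y)) ^ ((1:ℝ)/2) := by
  set h : ℝ → ℝ := fun x => Real.log (g (Real.exp x)) with hdef
  have hm : Measurable h := (Real.measurable_log.comp (hgm.comp Real.measurable_exp))
  have hsl : ∀ s : ℝ, Tendsto (fun x => h (x + s) - h x) atTop (nhds 0) := by
    intro s
    have h1 : Tendsto (fun x : ℝ => g (Real.exp s * Real.exp x) / g (Real.exp x)) atTop (nhds 1) :=
      (hslow (Real.exp s) (Real.exp_pos s)).comp Real.tendsto_exp_atTop
    have h2 : Tendsto (fun x : ℝ => Real.log (g (Real.exp s * Real.exp x) / g (Real.exp x)))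
        atTop (nhds 0) := by
      have := (Real.continuousAt_log one_ne_zero).tendsto.comp h1
      simpa [Function.comp_def] using this
    apply h2.congr
    intro x
    have hp1 : 0 < g (Real.exp s * Real.exp x) :=
      hgpos _ (mem_Ioi.mpr (by positivity))
    have hp2 : 0 < g (Real.exp x) := hgpos _ (Real.exp_pos x)
    rw [Real.log_div (ne_of_gt hp1) (ne_of_gt hp2), hdef]
    simp only
    rw [Real.exp_add, mul_comm (Real.exp x) (Real.exp s)]
  obtain ⟨X₀, hX₀⟩ := (uct hm hsl (1/4) (by norm_num)).exists_forall_of_atTop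
  have hreal := uct_real hX₀
  refine ⟨max 1 (Real.exp X₀), le_max_left _ _, ?_⟩
  intro x y hx hy
  have hx0 : (0:ℝ) < x := lt_of_lt_of_le one_pos (le_trans (le_max_left _ _) hx)
  have hy0 : (0:ℝ) < y := lt_of_lt_of_le one_pos (le_trans (le_max_left _ _) hy)
  have hlx : X₀ ≤ Real.log x := by
    rw [Real.le_log_iff_exp_le hx0]
    exact le_trans (le_max_right _ _) hx
  have hly : X₀ ≤ Real.log y := by
    rw [Real.le_log_iff_exp_le hy0]
    exact le_trans (le_max_right _ _) hy
  have hb := hreal (Real.log x) (Real.log y) hlx hly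
  have hgx : h (Real.log x) = Real.log (g x) := by rw [hdef]; simp [Real.exp_log hx0]
  have hgy : h (Real.log y) = Real.log (g y) := by rw [hdef]; simp [Real.exp_log hy0]
  rw [hgx, hgy, abs_log_sub_eq hx0 hy0] at hb
  set M := max (y/x) (x/y) with hM
  have hM1 : 1 ≤ M := by
    rcases le_total x y with hxy | hyx
    · exact le_trans (by rw [le_div_iff₀ hx0]; simpa using hxy) (le_max_left _ _)
    · exact le_trans (by rw [le_div_iff₀ hy0]; simpa using hyx) (le_max_right _ _)
  have hM0 : 0 < M := lt_of_lt_of_le one_pos hM1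
  have hgyx : Real.log (g y) - Real.log (g x) ≤ (1/4) * (Real.log M + 1) :=
    le_trans (le_abs_self _) hb
  have hgy0 : 0 < g y := hgpos _ hy0
  have hgx0 : 0 < g x := hgpos _ hx0
  have key : g y ≤ g x * Real.exp ((1/4) * (Real.log M + 1)) := by
    rw [← Real.exp_log hgy0, ← Real.exp_log hgx0, ← Real.exp_add, Real.exp_le_exp]
    linarith
  have e1 : Real.exp ((1/4) * (Real.log M + 1)) ≤ Real.exp (1/2) * M ^ ((1:ℝ)/2) := by
    have e2 : Real.exp ((1/4) * (Real.log M + 1)) = Real.exp (1/4) * M ^ ((1:ℝ)/4) := by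
      rw [Real.rpow_def_of_pos hM0, ← Real.exp_add]
      ring_nf
    rw [e2]
    have h4 : M ^ ((1:ℝ)/4) ≤ M ^ ((1:ℝ)/2) :=
      Real.rpow_le_rpow_of_exponent_le hM1 (by norm_num)
    have h5 : Real.exp (1/4:ℝ) ≤ Real.exp (1/2:ℝ) := Real.exp_le_exp.mpr (by norm_num)
    have hp : 0 ≤ M ^ ((1:ℝ)/4) := Real.rpow_nonneg hM0.le _
    have hq : 0 < Real.exp (1/4:ℝ) := Real.exp_pos _
    nlinarith
  calc g y ≤ g x * Real.exp ((1/4) * (Real.log M + 1)) := key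
    _ ≤ g x * (Real.exp (1/2) * M ^ ((1:ℝ)/2)) := mul_le_mul_of_nonneg_left e1 hgx0.le
    _ = Real.exp (1/2) * g x * M ^ ((1:ℝ)/2) := by ring

variable {g : ℝ → ℝ}

lemma gIoo (hgm : Measurable g) (hgpos : ∀ x ∈ Set.Ioi (0:ℝ), 0 < g x)
    (hgbdd : ∀ a b : ℝ, 0 < a → ∃ Cb : ℝ, ∀ x ∈ Set.Icc a b, g x ≤ Cb)
    (hint : IntegrableOn g (Set.Ioo 0 1)) (b : ℝ) :
    IntegrableOn g (Set.Ioo 0 b) := by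
  rcases le_or_gt b 1 with hb | hb
  · exact hint.mono_set (Ioo_subset_Ioo le_rfl hb)
  · have hsub : Ioo (0:ℝ) b ⊆ Ioo 0 1 ∪ Icc 1 b := by
      intro x hx
      rcases lt_or_ge x 1 with h1 | h1
      · exact Or.inl ⟨hx.1, h1⟩
      · exact Or.inr ⟨h1, hx.2.le⟩
    apply IntegrableOn.mono_set _ hsub
    apply hint.union
    obtain ⟨Cb, hCb⟩ := hgbdd 1 b one_pos
    apply Measure.integrableOn_of_bounded (M := max Cb 0)
    · rw [Real.volume_Icc]; exact ENNReal.ofReal_ne_top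
    · exact hgm.aestronglyMeasurable
    · filter_upwards [ae_restrict_mem measurableSet_Icc] with x hx
      rw [Real.norm_eq_abs, abs_of_pos (hgpos x (mem_Ioi.mpr (lt_of_lt_of_le one_pos hx.1)))]
      exact le_max_of_le_left (hCb x hx)

lemma tail_facts (hgm : Measurable g) (hgpos : ∀ x ∈ Set.Ioi (0:ℝ), 0 < g x)
    (hgbdd : ∀ a b : ℝ, 0 < a → ∃ Cb : ℝ, ∀ x ∈ Set.Icc a b, g x ≤ Cb)
    (hint : IntegrableOn g (Set.Ioo 0 1)) {lam X : ℝ} (hlam : 0 < lam) (hX : 0 < X) :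
    IntegrableOn (fun u => g (lam/u) / u^2) (Ioi (lam/X)) ∧
      ∫ u in Ioi (lam/X), g (lam/u) / u^2 ≤ lam⁻¹ * ∫ v in Ioo (0:ℝ) X, g v := by
  set G : ℝ → ℝ := (Ioo (0:ℝ) (X/lam)).indicator (fun v => g (lam*v)) with hG
  have hGeq : G = fun v => (Ioo (0:ℝ) X).indicator g (lam * v) := by
    funext v
    rw [hG]
    by_cases hv : v ∈ Ioo (0:ℝ) (X/lam)
    · rw [indicator_of_mem hv, indicator_of_mem]
      exact ⟨mul_pos hlam hv.1, by rw [← lt_div_iff₀' hlam]; exact hv.2⟩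
    · rw [indicator_of_notMem hv, indicator_of_notMem]
      intro hcon
      apply hv
      constructor
      · nlinarith [hcon.1, hcon.2]
      · rw [lt_div_iff₀' hlam]; exact hcon.2
  have hGint : Integrable G := by
    rw [hGeq]
    rw [MeasureTheory.integrable_comp_mul_left_iff _ (ne_of_gt hlam)]
    rw [integrable_indicator_iff measurableSet_Ioo]
    exact gIoo hgm hgpos hgbdd hint X
  have hGnonneg : ∀ v : ℝ, 0 ≤ G v := by
    intro v
    rw [hG]
    apply indicator_nonneg
    intro v hv
    exact (hgpos _ (mem_Ioi.mpr (mul_pos hlam hv.1))).le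
  -- substitution v = u⁻¹ : rpow lemma with p = -1
  have hiff := MeasureTheory.integrableOn_Ioi_comp_rpow_iff G (p := (-1:ℝ)) (by norm_num)
  have hsubint : IntegrableOn (fun x : ℝ => (|(-1:ℝ)| * x ^ ((-1:ℝ) - 1)) • G (x ^ (-1:ℝ))) (Ioi 0) :=
    hiff.mpr hGint.integrableOn
  have heqval : ∀ u ∈ Ioi (lam/X), (|(-1:ℝ)| * u ^ ((-1:ℝ) - 1)) • G (u ^ (-1:ℝ)) = g (lam/u) / u^2 := by
    intro u hu
    have hu0 : 0 < u := lt_trans (by positivity) hu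
    have h1 : u ^ (-1:ℝ) = u⁻¹ := Real.rpow_neg_one u
    have h2 : u ^ ((-1:ℝ) - 1) = (u^2)⁻¹ := by
      rw [show ((-1:ℝ) - 1) = ((-2 : ℤ) : ℝ) by norm_num, Real.rpow_intCast]
      simp [zpow_neg]
    have h3 : u⁻¹ ∈ Ioo (0:ℝ) (X/lam) := by
      constructor
      · positivity
      · rw [inv_lt_comm₀ hu0 (by positivity)]
        rw [inv_div]
        exact hu
    have h4 : G (u⁻¹) = g (lam * u⁻¹) := by rw [hG, indicator_of_mem h3]
    rw [h1, h2, smul_eq_mul, h4, abs_neg, abs_one, one_mul]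
    rw [mul_comm ((u^2)⁻¹) _, ← div_eq_mul_inv, ← div_eq_mul_inv]
  have hIoisub : Ioi (lam/X) ⊆ Ioi (0:ℝ) := Ioi_subset_Ioi (by positivity)
  have hint1 : IntegrableOn (fun u => g (lam/u) / u^2) (Ioi (lam/X)) := by
    apply IntegrableOn.congr_fun (hsubint.mono_set hIoisub) _ measurableSet_Ioi
    intro u hu
    exact (heqval u hu)
  constructor
  · exact hint1
  -- bound
  have hstep1 : ∫ u in Ioi (lam/X), g (lam/u) / u^2
      = ∫ u in Ioi (lam/X), (|(-1:ℝ)| * u ^ ((-1:ℝ) - 1)) • G (u ^ (-1:ℝ)) :=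
    (setIntegral_congr_fun measurableSet_Ioi heqval).symm
  have hstep2 : ∫ u in Ioi (lam/X), (|(-1:ℝ)| * u ^ ((-1:ℝ) - 1)) • G (u ^ (-1:ℝ))
      ≤ ∫ u in Ioi (0:ℝ), (|(-1:ℝ)| * u ^ ((-1:ℝ) - 1)) • G (u ^ (-1:ℝ)) := by
    apply setIntegral_mono_set hsubint
    · filter_upwards [ae_restrict_mem measurableSet_Ioi] with u hu
      have hu0 : (0:ℝ) < u := hu
      have := hGnonneg (u ^ (-1:ℝ))
      have h5 : (0:ℝ) ≤ u ^ ((-1:ℝ) - 1) := Real.rpow_nonneg hu0.le _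
      simp only [smul_eq_mul]
      positivity
    · exact Filter.Eventually.of_forall hIoisub
  have hstep3 : ∫ u in Ioi (0:ℝ), (|(-1:ℝ)| * u ^ ((-1:ℝ) - 1)) • G (u ^ (-1:ℝ))
      = ∫ v in Ioi (0:ℝ), G v := MeasureTheory.integral_comp_rpow_Ioi G (by norm_num)
  have hstep4 : ∫ v in Ioi (0:ℝ), G v = ∫ v in Ioo (0:ℝ) (X/lam), g (lam*v) := by
    rw [hG, integral_indicator measurableSet_Ioo, Measure.restrict_restrict measurableSet_Ioo]
    have : Ioo (0:ℝ) (X/lam) ∩ Ioi 0 = Ioo (0:ℝ) (X/lam) :=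
      inter_eq_left.mpr (fun v hv => hv.1)
    rw [this]
  have hstep5 : ∫ v in Ioo (0:ℝ) (X/lam), g (lam*v) = lam⁻¹ * ∫ v in Ioo (0:ℝ) X, g v := by
    have h0 : (0:ℝ) ≤ X/lam := by positivity
    rw [← integral_Ioc_eq_integral_Ioo, ← intervalIntegral.integral_of_le h0]
    rw [intervalIntegral.integral_comp_mul_left _ (ne_of_gt hlam)]
    rw [mul_zero, show lam * (X/lam) = X by field_simp]
    rw [intervalIntegral.integral_of_le hX.le, integral_Ioc_eq_integral_Ioo, smul_eq_mul]
  rw [hstep1, ← hstep5, ← hstep4, ← hstep3]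
  exact hstep2

lemma rpow_integrableOn_Ioc {r : ℝ} (h : -1 < r) :
    IntegrableOn (fun u : ℝ => u ^ r) (Ioc (0:ℝ) 1) := by
  have := intervalIntegral.intervalIntegrable_rpow' (a := 0) (b := 1) h
  rwa [intervalIntegrable_iff_integrableOn_Ioc_of_le zero_le_one] at this

lemma onecos_le_sq {u : ℝ} : 1 - Real.cos u ≤ u^2/2 := by
  nlinarith [Real.one_sub_sq_div_two_le_cos (x := u)]

lemma onecos_nonneg {u : ℝ} : 0 ≤ 1 - Real.cos u := by
  nlinarith [Real.cos_le_one u]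

lemma K_le_half {u : ℝ} (hu : 0 < u) : (1 - Real.cos u)/u^2 ≤ 1/2 := by
  rw [div_le_iff₀ (by positivity)]
  nlinarith [onecos_le_sq (u := u)]

lemma K_le_two_div {u : ℝ} (hu : 0 < u) : (1 - Real.cos u)/u^2 ≤ 2/u^2 := by
  apply div_le_div_of_nonneg_right _ (by positivity)
  · nlinarith [Real.neg_one_le_cos u]

lemma K_nonneg {u : ℝ} : 0 ≤ (1 - Real.cos u)/u^2 := by
  apply div_nonneg onecos_nonneg (sq_nonneg u)

lemma bound_measurable (E : ℝ) : Measurable (fun u : ℝ =>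
    E * ((1 - Real.cos u)/u^2) * (u ^ ((1:ℝ)/2) + u ^ (-(1:ℝ)/2))) :=
  (measurable_const.mul ((measurable_const.sub Real.measurable_cos).div
    (measurable_id.pow_const 2))).mul
    ((measurable_id.pow_const _).add (measurable_id.pow_const _))

lemma bound_integrable {E : ℝ} (hE : 0 ≤ E) :
    IntegrableOn (fun u : ℝ =>
      E * ((1 - Real.cos u)/u^2) * (u ^ ((1:ℝ)/2) + u ^ (-(1:ℝ)/2))) (Ioi (0:ℝ)) := by
  rw [← Ioc_union_Ioi_eq_Ioi (zero_le_one)]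
  apply IntegrableOn.union
  · -- on Ioc 0 1
    apply Integrable.mono' (g := fun u => E * (1/2) * (1 + u ^ (-(1:ℝ)/2)))
    · apply Integrable.const_mul
      apply Integrable.add
      · exact integrableOn_const (by rw [Real.volume_Ioc]; exact ENNReal.ofReal_ne_top)
      · exact rpow_integrableOn_Ioc (by norm_num)
    · exact ((bound_measurable E).aestronglyMeasurable).restrict
    · filter_upwards [ae_restrict_mem measurableSet_Ioc] with u hu
      have hu0 : 0 < u := hu.1
      have h1 : (0:ℝ) ≤ (1 - Real.cos u)/u^2 := K_nonneg
      have h2 : (0:ℝ) ≤ u ^ ((1:ℝ)/2) + u ^ (-(1:ℝ)/2) := by positivity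
      rw [Real.norm_eq_abs, abs_of_nonneg (by positivity)]
      have h3 : u ^ ((1:ℝ)/2) ≤ 1 := Real.rpow_le_one hu0.le hu.2 (by norm_num)
      have h4 : (1 - Real.cos u)/u^2 ≤ 1/2 := K_le_half hu0
      calc E * ((1 - Real.cos u)/u^2) * (u ^ ((1:ℝ)/2) + u ^ (-(1:ℝ)/2))
          ≤ E * (1/2) * (u ^ ((1:ℝ)/2) + u ^ (-(1:ℝ)/2)) := by
            apply mul_le_mul_of_nonneg_right _ h2
            exact mul_le_mul_of_nonneg_left h4 hE
        _ ≤ E * (1/2) * (1 + u ^ (-(1:ℝ)/2)) := by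
            apply mul_le_mul_of_nonneg_left _ (by positivity)
            exact add_le_add_left h3 _
  · -- on Ioi 1
    apply Integrable.mono' (g := fun u => (4*E) * u ^ (-(3:ℝ)/2))
    · exact (integrableOn_Ioi_rpow_of_lt (by norm_num) one_pos).const_mul _
    · exact ((bound_measurable E).aestronglyMeasurable).restrict
    · filter_upwards [ae_restrict_mem measurableSet_Ioi] with u hu
      have hu1 : (1:ℝ) < u := hu
      have hu0 : (0:ℝ) < u := lt_trans one_pos hu1
      have h1 : (0:ℝ) ≤ (1 - Real.cos u)/u^2 := K_nonneg
      rw [Real.norm_eq_abs, abs_of_nonneg (by positivity)]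
      have h2 : u ^ (-(1:ℝ)/2) ≤ u ^ ((1:ℝ)/2) :=
        Real.rpow_le_rpow_of_exponent_le hu1.le (by norm_num)
      have h3 : u ^ ((1:ℝ)/2) + u ^ (-(1:ℝ)/2) ≤ 2 * u ^ ((1:ℝ)/2) := by linarith
      have h4 : (1 - Real.cos u)/u^2 ≤ 2/u^2 := K_le_two_div hu0
      calc E * ((1 - Real.cos u)/u^2) * (u ^ ((1:ℝ)/2) + u ^ (-(1:ℝ)/2))
          ≤ E * (2/u^2) * (2 * u ^ ((1:ℝ)/2)) := by
            apply mul_le_mul (mul_le_mul_of_nonneg_left h4 hE) h3 (by positivity)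
            positivity
        _ = (4*E) * (u ^ ((1:ℝ)/2) / u^2) := by ring
        _ = (4*E) * u ^ (-(3:ℝ)/2) := by
            congr 1
            rw [show (u:ℝ)^2 = u ^ ((2:ℝ)) by rw [← Real.rpow_natCast u 2]; norm_num]
            rw [← Real.rpow_sub hu0]
            norm_num

lemma onecos_le_two {u : ℝ} : 1 - Real.cos u ≤ 2 := by
  nlinarith [Real.neg_one_le_cos u]

theorem statement19 (g : ℝ → ℝ) (hgm : Measurable g)
    (hgpos : ∀ x ∈ Set.Ioi (0 : ℝ), 0 < g x)
    (hgbdd : ∀ a b : ℝ, 0 < a → ∃ Cb : ℝ, ∀ x ∈ Set.Icc a b, g x ≤ Cb)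
    (hslow : ∀ c : ℝ, 0 < c →
      Tendsto (fun x => g (c * x) / g x) atTop (nhds 1))
    (hint : IntegrableOn g (Set.Ioo 0 1)) :
    Tendsto (fun lam =>
        (∫ x in Set.Ioi (0 : ℝ), (1 - Real.cos (lam * x)) * g (1 / x) / x ^ 2) /
          (lam * g lam))
      atTop (nhds (Real.pi / 2)) := by
  obtain ⟨X, hX1, hpot⟩ := potter g hgm hgpos hslow
  have hX0 : (0:ℝ) < X := lt_of_lt_of_le one_pos hX1
  set E := Real.exp ((1:ℝ)/2) with hE
  have hE0 : (0:ℝ) < E := Real.exp_pos _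
  set c₀ := ∫ v in Ioo (0:ℝ) X, g v with hc₀
  have hc₀0 : 0 ≤ c₀ :=
    setIntegral_nonneg measurableSet_Ioo (fun v hv => (hgpos v (mem_Ioi.mpr hv.1)).le)
  have hgX : 0 < g X := hgpos X (mem_Ioi.mpr hX0)
  set Hf : ℝ → ℝ → ℝ := fun lam u => (1 - Real.cos u) * g (lam/u) / u^2 with hHf
  have hHmeas : ∀ lam, Measurable (Hf lam) := fun lam =>
    ((measurable_const.sub Real.measurable_cos).mul
      (hgm.comp (measurable_const.div measurable_id))).div (measurable_id.pow_const 2)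
  -- basic facts for lam ≥ X*X
  have hXXlam : ∀ lam : ℝ, X*X ≤ lam → X ≤ lam := fun lam h =>
    le_trans (by nlinarith) h
  have hlam0 : ∀ lam : ℝ, X*X ≤ lam → 0 < lam := fun lam h =>
    lt_of_lt_of_le hX0 (hXXlam lam h)
  have hglam : ∀ lam : ℝ, X*X ≤ lam → 0 < g lam := fun lam h =>
    hgpos lam (mem_Ioi.mpr (hlam0 lam h))
  -- Potter upper bound for u in (0, lam/X]
  have hup : ∀ lam u : ℝ, X*X ≤ lam → u ∈ Ioc (0:ℝ) (lam/X) →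
      g (lam/u) ≤ E * g lam * (u ^ ((1:ℝ)/2) + u ^ (-(1:ℝ)/2)) := by
    intro lam u hlam hu
    have hu0 : 0 < u := hu.1
    have hl0 : 0 < lam := hlam0 lam hlam
    have hyX : X ≤ lam/u := by
      rw [le_div_iff₀ hu0]
      calc X * u ≤ X * (lam/X) := by
            apply mul_le_mul_of_nonneg_left hu.2 hX0.le
        _ = lam := by field_simp
    have h0 := hpot lam (lam/u) (hXXlam lam hlam) hyX
    have e1 : (lam/u)/lam = u⁻¹ := by
      field_simp
    have e2 : lam/(lam/u) = u := by
      field_simp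
    rw [e1, e2] at h0
    have hmax : (max u⁻¹ u) ^ ((1:ℝ)/2) ≤ u ^ ((1:ℝ)/2) + u ^ (-(1:ℝ)/2) := by
      rcases le_total u⁻¹ u with hc | hc
      · rw [max_eq_right hc]
        exact le_add_of_nonneg_right (Real.rpow_nonneg hu0.le _)
      · rw [max_eq_left hc]
        have : u⁻¹ ^ ((1:ℝ)/2) = u ^ (-(1:ℝ)/2) := by
          rw [Real.inv_rpow hu0.le, show (-(1:ℝ)/2) = -((1:ℝ)/2) by norm_num,
            Real.rpow_neg hu0.le]
        rw [this]
        exact le_add_of_nonneg_left (Real.rpow_nonneg hu0.le _)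
    calc g (lam/u) ≤ E * g lam * (max u⁻¹ u) ^ ((1:ℝ)/2) := h0
      _ ≤ E * g lam * (u ^ ((1:ℝ)/2) + u ^ (-(1:ℝ)/2)) := by
          exact mul_le_mul_of_nonneg_left hmax (mul_nonneg hE0.le (hglam lam hlam).le)
  -- Potter lower bound
  have hlow : ∀ lam : ℝ, X*X ≤ lam → g X ≤ E * g lam * (lam/X) ^ ((1:ℝ)/2) := by
    intro lam hlam
    have h0 := hpot lam X (hXXlam lam hlam) le_rfl
    have hl0 : 0 < lam := hlam0 lam hlam
    have hmax : max (X/lam) (lam/X) = lam/X := by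
      apply max_eq_right
      calc X/lam ≤ 1 := by rw [div_le_one hl0]; exact hXXlam lam hlam
        _ ≤ lam/X := by rw [le_div_iff₀ hX0]; simpa using hXXlam lam hlam
    rwa [hmax] at h0
  -- pointwise bound on Hf
  have hHbound : ∀ lam u : ℝ, X*X ≤ lam → u ∈ Ioc (0:ℝ) (lam/X) →
      Hf lam u ≤ (E * ((1 - Real.cos u)/u^2) * (u ^ ((1:ℝ)/2) + u ^ (-(1:ℝ)/2))) * g lam := by
    intro lam u hlam hu
    have hu0 : 0 < u := hu.1
    calc Hf lam u = ((1 - Real.cos u)/u^2) * g (lam/u) := by rw [hHf]; ring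
      _ ≤ ((1 - Real.cos u)/u^2) * (E * g lam * (u ^ ((1:ℝ)/2) + u ^ (-(1:ℝ)/2))) :=
          mul_le_mul_of_nonneg_left (hup lam u hlam hu) K_nonneg
      _ = (E * ((1 - Real.cos u)/u^2) * (u ^ ((1:ℝ)/2) + u ^ (-(1:ℝ)/2))) * g lam := by ring
  have hHnonneg : ∀ lam u : ℝ, 0 < lam → 0 < u → 0 ≤ Hf lam u := by
    intro lam u hl hu
    rw [hHf]
    have := (hgpos (lam/u) (mem_Ioi.mpr (by positivity))).le
    have := onecos_nonneg (u := u)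
    positivity
  have hHle2 : ∀ lam u : ℝ, 0 < lam → 0 < u → Hf lam u ≤ 2 * (g (lam/u) / u^2) := by
    intro lam u hl hu
    rw [hHf]
    have hg0 := (hgpos (lam/u) (mem_Ioi.mpr (by positivity))).le
    calc (1 - Real.cos u) * g (lam/u) / u^2 = (1 - Real.cos u) * (g (lam/u) / u^2) := by ring
      _ ≤ 2 * (g (lam/u) / u^2) := by
          apply mul_le_mul_of_nonneg_right onecos_le_two
          positivity
  -- integrability of Hf pieces
  have hHint1 : ∀ lam : ℝ, X*X ≤ lam → IntegrableOn (Hf lam) (Ioc 0 (lam/X)) := by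
    intro lam hlam
    apply Integrable.mono'
      (((bound_integrable hE0.le).mono_set Ioc_subset_Ioi_self).mul_const (g lam))
    · exact ((hHmeas lam).aestronglyMeasurable).restrict
    · filter_upwards [ae_restrict_mem measurableSet_Ioc] with u hu
      rw [Real.norm_eq_abs, abs_of_nonneg (hHnonneg lam u (hlam0 lam hlam) hu.1)]
      exact hHbound lam u hlam hu
  have hHint2 : ∀ lam : ℝ, X*X ≤ lam → IntegrableOn (Hf lam) (Ioi (lam/X)) := by
    intro lam hlam
    have hl0 := hlam0 lam hlam
    apply Integrable.mono'
      (((tail_facts hgm hgpos hgbdd hint hl0 hX0).1).const_mul 2)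
    · exact ((hHmeas lam).aestronglyMeasurable).restrict
    · filter_upwards [ae_restrict_mem measurableSet_Ioi] with u hu
      have hu0 : 0 < u := lt_trans (div_pos hl0 hX0) hu
      rw [Real.norm_eq_abs, abs_of_nonneg (hHnonneg lam u hl0 hu0)]
      exact hHle2 lam u hl0 hu0
  have hHint : ∀ lam : ℝ, X*X ≤ lam → IntegrableOn (Hf lam) (Ioi 0) := by
    intro lam hlam
    have h0 : (0:ℝ) ≤ lam/X := (div_pos (hlam0 lam hlam) hX0).le
    rw [← Ioc_union_Ioi_eq_Ioi h0]
    exact (hHint1 lam hlam).union (hHint2 lam hlam)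
  -- change of variables
  have hcv : ∀ lam : ℝ, 0 < lam →
      (∫ x in Ioi (0:ℝ), (1 - Real.cos (lam*x)) * g (1/x) / x^2)
        = lam * ∫ u in Ioi (0:ℝ), Hf lam u := by
    intro lam hl0
    have h1 : ∀ x ∈ Ioi (0:ℝ), (1 - Real.cos (lam*x)) * g (1/x) / x^2
        = lam^2 * Hf lam (lam * x) := by
      intro x hx
      have hx0 : 0 < x := hx
      rw [hHf]
      simp only
      have e1 : lam/(lam*x) = 1/x := by field_simp
      rw [e1]
      field_simp
    rw [setIntegral_congr_fun measurableSet_Ioi h1, integral_const_mul,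
      MeasureTheory.integral_comp_mul_left_Ioi (Hf lam) 0 hl0, mul_zero, smul_eq_mul,
      ← mul_assoc]
    congr 1
    rw [sq, mul_assoc, mul_inv_cancel₀ (ne_of_gt hl0), mul_one]
  -- split
  have hsplit : ∀ lam : ℝ, X*X ≤ lam →
      (∫ u in Ioi (0:ℝ), Hf lam u)
        = (∫ u in Ioc (0:ℝ) (lam/X), Hf lam u) + ∫ u in Ioi (lam/X), Hf lam u := by
    intro lam hlam
    have h0 : (0:ℝ) ≤ lam/X := (div_pos (hlam0 lam hlam) hX0).le
    rw [← Ioc_union_Ioi_eq_Ioi h0]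
    exact setIntegral_union (Ioc_disjoint_Ioi le_rfl) measurableSet_Ioi
      (hHint1 lam hlam) (hHint2 lam hlam)
  -- define A and B
  set FF : ℝ → ℝ → ℝ :=
    fun lam => (Ioc (0:ℝ) (lam/X)).indicator (fun u => Hf lam u / g lam) with hFF
  set A : ℝ → ℝ := fun lam => ∫ u in Ioi (0:ℝ), FF lam u with hA
  set B : ℝ → ℝ := fun lam => (∫ u in Ioi (lam/X), Hf lam u) / g lam with hB
  have hAeq : ∀ lam : ℝ, 0 < lam →
      A lam = (∫ u in Ioc (0:ℝ) (lam/X), Hf lam u) / g lam := by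
    intro lam hl0
    rw [hA, hFF]
    simp only
    rw [integral_indicator measurableSet_Ioc, Measure.restrict_restrict measurableSet_Ioc]
    have hss : Ioc (0:ℝ) (lam/X) ∩ Ioi 0 = Ioc (0:ℝ) (lam/X) :=
      inter_eq_left.mpr (fun v hv => hv.1)
    rw [hss, integral_div]
  -- the ratio equals A + B eventually
  have hcongr : ∀ᶠ lam in atTop,
      (∫ x in Set.Ioi (0:ℝ), (1 - Real.cos (lam * x)) * g (1 / x) / x ^ 2) / (lam * g lam)
        = A lam + B lam := by
    filter_upwards [eventually_ge_atTop (X*X)] with lam hlam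
    have hl0 := hlam0 lam hlam
    rw [hcv lam hl0, hsplit lam hlam, hAeq lam hl0, hB]
    rw [mul_div_mul_left _ _ (ne_of_gt hl0), add_div]
  -- convergence of A via dominated convergence
  have hAlim : Tendsto A atTop (nhds (π/2)) := by
    rw [← integral_K]
    apply MeasureTheory.tendsto_integral_filter_of_dominated_convergence
      (fun u : ℝ => E * ((1 - Real.cos u)/u^2) * (u ^ ((1:ℝ)/2) + u ^ (-(1:ℝ)/2)))
    · filter_upwards with lam
      exact ((((hHmeas lam).div_const (g lam)).indicator
        measurableSet_Ioc).aestronglyMeasurable).restrict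
    · filter_upwards [eventually_ge_atTop (X*X)] with lam hlam
      filter_upwards [ae_restrict_mem measurableSet_Ioi] with u hu
      have hu0 : (0:ℝ) < u := hu
      have hbnd_nonneg : 0 ≤ E * ((1 - Real.cos u)/u^2) * (u ^ ((1:ℝ)/2) + u ^ (-(1:ℝ)/2)) := by
        apply mul_nonneg (mul_nonneg hE0.le K_nonneg)
        positivity
      simp only [hFF, indicator_apply]
      by_cases hm : u ∈ Ioc (0:ℝ) (lam/X)
      · rw [if_pos hm]
        have hg0 := hglam lam hlam
        rw [Real.norm_eq_abs,
          abs_of_nonneg (div_nonneg (hHnonneg lam u (hlam0 lam hlam) hu0) hg0.le)]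
        rw [div_le_iff₀ hg0]
        exact hHbound lam u hlam hm
      · rw [if_neg hm]
        simpa using hbnd_nonneg
    · exact bound_integrable hE0.le
    · filter_upwards [ae_restrict_mem measurableSet_Ioi] with u hu
      have hu0 : (0:ℝ) < u := hu
      have h1 : Tendsto (fun lam => g (u⁻¹ * lam) / g lam) atTop (nhds 1) :=
        hslow u⁻¹ (by positivity)
      have h2 := h1.const_mul ((1 - Real.cos u)/u^2)
      rw [mul_one] at h2
      apply h2.congr'
      filter_upwards [eventually_ge_atTop (u * X), eventually_gt_atTop (0:ℝ)]
        with lam hlam hl0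
      have hmem : u ∈ Ioc (0:ℝ) (lam/X) := by
        constructor
        · exact hu0
        · rw [le_div_iff₀ hX0]; exact hlam
      simp only [hFF, indicator_apply, if_pos hmem, hHf]
      have e1 : u⁻¹ * lam = lam/u := by
        field_simp
      rw [e1]
      ring
  -- convergence of B to 0
  have hBlim : Tendsto B atTop (nhds 0) := by
    set D : ℝ := 2*c₀*E/(g X * X ^ ((1:ℝ)/2)) with hD
    apply squeeze_zero' (g := fun lam => D * lam ^ (-(1:ℝ)/2))
    · filter_upwards [eventually_ge_atTop (X*X)] with lam hlam
      have hl0 := hlam0 lam hlam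
      apply div_nonneg _ (hglam lam hlam).le
      apply setIntegral_nonneg measurableSet_Ioi
      intro u hu
      exact hHnonneg lam u hl0 (lt_trans (div_pos hl0 hX0) hu)
    · filter_upwards [eventually_ge_atTop (X*X)] with lam hlam
      have hl0 := hlam0 lam hlam
      have hg0 := hglam lam hlam
      -- tail integral bound
      have ht := tail_facts hgm hgpos hgbdd hint hl0 hX0
      have hT1 : (∫ u in Ioi (lam/X), Hf lam u) ≤ 2 * (lam⁻¹ * c₀) := by
        calc (∫ u in Ioi (lam/X), Hf lam u)
            ≤ ∫ u in Ioi (lam/X), 2 * (g (lam/u) / u^2) := by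
              apply setIntegral_mono_on (hHint2 lam hlam) (ht.1.const_mul 2)
                measurableSet_Ioi
              intro u hu
              exact hHle2 lam u hl0 (lt_trans (div_pos hl0 hX0) hu)
          _ = 2 * ∫ u in Ioi (lam/X), g (lam/u) / u^2 := integral_const_mul 2 _
          _ ≤ 2 * (lam⁻¹ * c₀) := by
              apply mul_le_mul_of_nonneg_left ht.2 (by norm_num)
      -- rpow algebra
      set a : ℝ := lam ^ ((1:ℝ)/2) with ha
      set b : ℝ := X ^ ((1:ℝ)/2) with hb
      have ha0 : 0 < a := Real.rpow_pos_of_pos hl0 _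
      have hb0 : 0 < b := Real.rpow_pos_of_pos hX0 _
      have ha2 : a^2 = lam := by
        rw [ha, ← Real.rpow_natCast (lam ^ ((1:ℝ)/2)) 2, ← Real.rpow_mul hl0.le]
        norm_num
      have haneg : lam ^ (-(1:ℝ)/2) = a⁻¹ := by
        rw [ha, show (-(1:ℝ)/2) = -((1:ℝ)/2) by norm_num, Real.rpow_neg hl0.le]
      have hdivr : (lam/X) ^ ((1:ℝ)/2) = a/b :=
        Real.div_rpow hl0.le hX0.le _
      have h5 := hlow lam hlam
      rw [hdivr] at h5
      have h5' : g X * b ≤ E * g lam * a := by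
        have h6 := mul_le_mul_of_nonneg_right h5 hb0.le
        rwa [mul_assoc, div_mul_cancel₀ _ (ne_of_gt hb0)] at h6
      have hBle : B lam ≤ (2 * (lam⁻¹ * c₀)) / g lam := by
        rw [hB]
        simp only
        gcongr
      calc B lam ≤ (2 * (lam⁻¹ * c₀)) / g lam := hBle
        _ ≤ D * lam ^ (-(1:ℝ)/2) := by
            rw [haneg, hD, div_le_iff₀ hg0]
            have hinv : lam⁻¹ = (a^2)⁻¹ := by rw [ha2]
            rw [hinv, div_mul_eq_mul_div, div_mul_eq_mul_div,
              le_div_iff₀ (by positivity : (0:ℝ) < g X * b)]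
            have hnn : (0:ℝ) ≤ 2*((a^2)⁻¹*c₀) := by
              have := mul_nonneg (by positivity : (0:ℝ) ≤ (a^2)⁻¹) hc₀0
              linarith
            calc 2*((a^2)⁻¹*c₀)*(g X*b) ≤ 2*((a^2)⁻¹*c₀)*(E*g lam*a) :=
                  mul_le_mul_of_nonneg_left h5' hnn
              _ = 2*c₀*E*a⁻¹*(g lam) := by
                  field_simp
    · have h8 : Tendsto (fun lam : ℝ => lam ^ (-((1:ℝ)/2))) atTop (nhds 0) :=
        tendsto_rpow_neg_atTop (by norm_num)
      have h9 := h8.const_mul D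
      rw [mul_zero] at h9
      apply h9.congr
      intro lam
      norm_num
  have hfinal := hAlim.add hBlim
  rw [add_zero] at hfinal
  exact Tendsto.congr' (hcongr.mono fun lam h => h.symm) hfinal
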